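/- Define the remaining-capacity function rem : ℝ → List ℝ → ℝ by rem c [] = c and rem c (d :: l) = rem (c − min c d) l, modeling strict priority queueing (SPQ): starting from router capacity c, each buyer in priority order consumes min of the remaining capacity and her demand. Then for every c ≥ 0, every list l of nonnegative demands, and every sublist l' of l, one has rem c l' ≥ rem c l, and moreover rem c l ≥ 0. (In particular, under SPQ the capacity available to a buyer weakly increases when the set of higher-priority buyers shrinks, i.e., when her bid and hence her priority increases.) -/

import Mathlib

/-- Remaining capacity after serving a list of demands in priority order
    under strict priority queueing (SPQ). -/
def rem (c : ℝ) : List ℝ → ℝ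
  | [] => c
  | d :: l => rem (c - min c d) l

lemma rem_nonneg : ∀ (l : List ℝ) (c : ℝ), 0 ≤ c → 0 ≤ rem c l
  | [], c, hc => hc
  | d :: l, c, hc => rem_nonneg l _ (by simp [sub_nonneg, min_le_left])

lemma rem_mono : ∀ (l : List ℝ) {c c' : ℝ}, c ≤ c' → rem c l ≤ rem c' l
  | [], _, _, h => h
  | d :: l, c, c', h => by
    simp only [rem]
    exact rem_mono l (by
      have : c - min c d = max 0 (c - d) := by
        rcases le_total c d with h1 | h1 <;> simp [min_eq_left, min_eq_right, h1, sub_nonpos.2, max_eq_left, max_eq_right, sub_nonneg.2]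
      have : c' - min c' d = max 0 (c' - d) := by
        rcases le_total c' d with h1 | h1 <;> simp [min_eq_left, min_eq_right, h1, sub_nonpos.2, max_eq_left, max_eq_right, sub_nonneg.2]
      calc c - min c d = max 0 (c - d) := by
            rcases le_total c d with h1 | h1 <;>
              simp [min_eq_left h1, min_eq_right h1, max_eq_left (sub_nonpos.2 h1), max_eq_right (sub_nonneg.2 h1)]
        _ ≤ max 0 (c' - d) := max_le_max le_rfl (by linarith)
        _ = c' - min c' d := by
            rcases le_total c' d with h1 | h1 <;>
              simp [min_eq_left h1, min_eq_right h1, max_eq_left (sub_nonpos.2 h1), max_eq_right (sub_nonneg.2 h1)])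

lemma rem_sublist_ge : ∀ {l' l : List ℝ}, l'.Sublist l → ∀ c : ℝ, 0 ≤ c →
    (∀ d ∈ l, 0 ≤ d) → rem c l ≤ rem c l' := by
  intro l' l h
  induction h with
  | slnil => intro c _ _; exact le_rfl
  | cons d h ih =>
    intro c hc hl
    simp only [rem]
    calc rem (c - min c d) _ ≤ rem c _ := rem_mono _ (by
          have : 0 ≤ min c d := le_min hc (hl d List.mem_cons_self)
          linarith)
      _ ≤ _ := ih c hc (fun x hx => hl x (List.mem_cons_of_mem d hx))
  | cons_cons d h ih =>
    intro c hc hl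
    simp only [rem]
    exact ih _ (by simp [sub_nonneg, min_le_left]) (fun x hx => hl x (List.mem_cons_of_mem d hx))

/-- For nonnegative capacity and nonnegative demands, the remaining capacity
under SPQ weakly increases when the list of higher-priority demands shrinks
to a sublist, and remaining capacity is always nonnegative. -/
theorem rem_sublist_ge_and_nonneg (c : ℝ) (hc : 0 ≤ c)
    (l : List ℝ) (hl : ∀ d ∈ l, 0 ≤ d)
    (l' : List ℝ) (hl' : l'.Sublist l) :
    rem c l' ≥ rem c l ∧ rem c l ≥ 0 := by
  exact ⟨rem_sublist_ge hl' c hc hl, rem_nonneg l c hc⟩
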